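/- Suppose G satisfies the curvature-dimension inequality CD(m,κ), and f : V → ℝ is a harmonic eigenfunction of the Laplacian with eigenvalue λ > 0, i.e., −Δf(x) = λ f(x) for all x ∈ V. Then for every real number α with (α − 2)λ + 2κ > 0 and every vertex x ∈ V, |∇f|²(x) + α λ f²(x) ≤ ((α² − 4/m)λ + 2κα) / ((α − 2)λ + 2κ) · λ · max_{z ∈ V} f²(z). -/
import Mathlib


open Finset

/-- The weighted degree `d(x) = Σ_y w(x,y)`. -/
noncomputable def deg {V : Type*} [Fintype V] (w : V → V → ℝ) (x : V) : ℝ :=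
  ∑ y, w x y

/-- The graph Laplacian `Δf(x) = (1/d(x)) Σ_y w(x,y) (f(y) − f(x))`. -/
noncomputable def lap {V : Type*} [Fintype V] (w : V → V → ℝ) (f : V → ℝ) (x : V) : ℝ :=
  (1 / deg w x) * ∑ y, w x y * (f y - f x)

/-- The bilinear operator `Γ(f,g)(x) = (1/2)(Δ(fg)(x) − f(x)Δg(x) − g(x)Δf(x))`. -/
noncomputable def gam {V : Type*} [Fintype V] (w : V → V → ℝ) (f g : V → ℝ) (x : V) : ℝ :=
  (1 / 2) * (lap w (fun y => f y * g y) x - f x * lap w g x - g x * lap w f x)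

/-- The curvature operator `Γ₂(f,g)(x) = (1/2)(ΔΓ(f,g)(x) − Γ(f,Δg)(x) − Γ(g,Δf)(x))`. -/
noncomputable def gam2 {V : Type*} [Fintype V] (w : V → V → ℝ) (f g : V → ℝ) (x : V) : ℝ :=
  (1 / 2) * (lap w (gam w f g) x - gam w f (lap w g) x - gam w g (lap w f) x)

/-- The gradient square `|∇f|²(x) = (1/d(x)) Σ_y w(x,y) (f(x) − f(y))²`. -/
noncomputable def gradsq {V : Type*} [Fintype V] (w : V → V → ℝ) (f : V → ℝ) (x : V) : ℝ :=
  (1 / deg w x) * ∑ y, w x y * (f x - f y) ^ 2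

/-- The curvature-dimension inequality `CD(m,κ)`. -/
def CD {V : Type*} [Fintype V] (w : V → V → ℝ) (m κ : ℝ) : Prop :=
  ∀ (f : V → ℝ) (x : V), gam2 w f f x ≥ (1 / m) * (lap w f x) ^ 2 + κ * gam w f f x

section aux
variable {V : Type*} [Fintype V] (w : V → V → ℝ)

lemma lap_smul (c : ℝ) (g : V → ℝ) (x : V) :
    lap w (fun y => c * g y) x = c * lap w g x := by
  unfold lap
  rw [show ∑ y, w x y * (c * g y - c * g x) = c * ∑ y, w x y * (g y - g x) by
    rw [Finset.mul_sum]; exact Finset.sum_congr rfl fun y _ => by ring]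
  ring

lemma lap_add_smul (c : ℝ) (g h : V → ℝ) (x : V) :
    lap w (fun y => g y + c * h y) x = lap w g x + c * lap w h x := by
  unfold lap
  rw [show ∑ y, w x y * (g y + c * h y - (g x + c * h x))
      = (∑ y, w x y * (g y - g x)) + c * ∑ y, w x y * (h y - h x) by
    rw [Finset.mul_sum, ← Finset.sum_add_distrib]
    exact Finset.sum_congr rfl fun y _ => by ring]
  ring

lemma lap_sq (f : V → ℝ) (x : V) :
    lap w (fun y => f y * f y) x = gradsq w f x + 2 * f x * lap w f x := by
  unfold lap gradsq
  rw [show ∑ y, w x y * (f y * f y - f x * f x)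
      = (∑ y, w x y * (f x - f y) ^ 2) + 2 * f x * ∑ y, w x y * (f y - f x) by
    rw [Finset.mul_sum, ← Finset.sum_add_distrib]
    exact Finset.sum_congr rfl fun y _ => by ring]
  ring

lemma gam_self (f : V → ℝ) (x : V) :
    gam w f f x = (1 / 2) * gradsq w f x := by
  unfold gam
  rw [lap_sq]
  ring

lemma gam_smul_right (f : V → ℝ) (c : ℝ) (g : V → ℝ) (x : V) :
    gam w f (fun y => c * g y) x = c * gam w f g x := by
  unfold gam
  rw [show (fun y => f y * (c * g y)) = fun y => c * (f y * g y) from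
    funext fun y => by ring, lap_smul, lap_smul]
  ring

lemma lap_nonpos (hnonneg : ∀ x y, 0 ≤ w x y) (hdeg : ∀ x, 0 < deg w x)
    (g : V → ℝ) (x₀ : V) (hmax : ∀ y, g y ≤ g x₀) : lap w g x₀ ≤ 0 := by
  unfold lap
  apply mul_nonpos_of_nonneg_of_nonpos
  · exact one_div_nonneg.mpr (hdeg x₀).le
  · exact Finset.sum_nonpos fun y _ =>
      mul_nonpos_of_nonneg_of_nonpos (hnonneg x₀ y) (by linarith [hmax y])

lemma sum_deg_lap (hsymm : ∀ x y, w x y = w y x) (hdeg : ∀ x, 0 < deg w x)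
    (g : V → ℝ) : ∑ x, deg w x * lap w g x = 0 := by
  have h1 : ∀ x, deg w x * lap w g x = ∑ y, w x y * (g y - g x) := by
    intro x; unfold lap
    rw [← mul_assoc, mul_one_div, div_self (hdeg x).ne', one_mul]
  rw [Finset.sum_congr rfl fun x _ => h1 x]
  have h2 : ∑ x : V, ∑ y : V, w x y * (g y - g x)
      = ∑ x : V, ∑ y : V, -(w x y * (g y - g x)) := by
    conv_lhs => rw [Finset.sum_comm]
    refine Finset.sum_congr rfl fun a _ => Finset.sum_congr rfl fun b _ => ?_
    rw [hsymm b a]; ring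
  rw [show (∑ x : V, ∑ y : V, -(w x y * (g y - g x)))
      = -∑ x : V, ∑ y : V, w x y * (g y - g x) by simp] at h2
  linarith

end aux

theorem harnack_alpha {V : Type*} [Fintype V] (w : V → V → ℝ)
    (hsymm : ∀ x y, w x y = w y x) (hnonneg : ∀ x y, 0 ≤ w x y)
    (hloop : ∀ x, w x x = 0) (hdeg : ∀ x, 0 < deg w x)
    (hconn : (SimpleGraph.fromRel fun x y => 0 < w x y).Connected)
    (m κ : ℝ) (hm : 0 < m) (hCD : CD w m κ)
    (lam : ℝ) (hlam : 0 < lam) (f : V → ℝ) (hf : ∀ x, -lap w f x = lam * f x)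
    (α : ℝ) (hα : (α - 2) * lam + 2 * κ > 0) (x : V) :
    gradsq w f x + α * lam * f x ^ 2 ≤
      ((α ^ 2 - 4 / m) * lam + 2 * κ * α) / ((α - 2) * lam + 2 * κ) * lam *
        ⨆ z, f z ^ 2 := by
  classical
  haveI : Nonempty V := ⟨x⟩
  have hlapf : ∀ y, lap w f y = -lam * f y := fun y => by have := hf y; linarith
  by_cases hzero : ∀ z, f z = 0
  · have hgr : gradsq w f x = 0 := by
      unfold gradsq
      rw [Finset.sum_eq_zero fun y _ => by rw [hzero x, hzero y]; ring]
      ring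
    have hM : (⨆ z, f z ^ 2) = 0 := by
      rw [show (fun z => f z ^ 2) = fun _ => (0 : ℝ) from
        funext fun z => by rw [hzero z]; ring, ciSup_const]
    rw [hM, hgr, hzero x]
    norm_num
  · push_neg at hzero
    obtain ⟨x₁, hx₁⟩ := hzero
    -- Lichnerowicz-type bound: κ ≤ lam - lam/m
    set T : ℝ := ∑ z, deg w z * f z ^ 2 with hT
    have hTpos : 0 < T := by
      apply Finset.sum_pos' (fun i _ => mul_nonneg (hdeg i).le (sq_nonneg _))
      exact ⟨x₁, Finset.mem_univ _,
        mul_pos (hdeg x₁) (lt_of_le_of_ne (sq_nonneg _) (Ne.symm (pow_ne_zero _ hx₁)))⟩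
    have hsum_gam : ∑ z, deg w z * gam w f f z = lam * T := by
      have e : ∀ z, deg w z * gam w f f z
          = (1 / 2) * (deg w z * lap w (fun y => f y * f y) z)
            + lam * (deg w z * f z ^ 2) := by
        intro z
        unfold gam
        rw [hlapf z]; ring
      rw [Finset.sum_congr rfl fun z _ => e z, Finset.sum_add_distrib,
        ← Finset.mul_sum, ← Finset.mul_sum, sum_deg_lap w hsymm hdeg, ← hT]
      ring
    have hsum_gam2 : ∑ z, deg w z * gam2 w f f z = lam ^ 2 * T := by
      have e : ∀ z, deg w z * gam2 w f f z
          = (1 / 2) * (deg w z * lap w (gam w f f) z)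
            + lam * (deg w z * gam w f f z) := by
        intro z
        unfold gam2
        rw [show lap w f = fun y => -lam * f y from funext hlapf, gam_smul_right]
        ring
      rw [Finset.sum_congr rfl fun z _ => e z, Finset.sum_add_distrib,
        ← Finset.mul_sum, ← Finset.mul_sum, sum_deg_lap w hsymm hdeg, hsum_gam]
      ring
    have hCDsum : (1 / m) * (lam ^ 2 * T) + κ * (lam * T) ≤ lam ^ 2 * T := by
      have h := Finset.sum_le_sum (s := Finset.univ)
        (fun z _ => mul_le_mul_of_nonneg_left (hCD f z) (hdeg z).le)
      have h1 : ∑ z, deg w z * ((1 / m) * (lap w f z) ^ 2 + κ * gam w f f z)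
          = (1 / m) * lam ^ 2 * T + κ * (lam * T) := by
        have e : ∀ z, deg w z * ((1 / m) * (lap w f z) ^ 2 + κ * gam w f f z)
            = ((1 / m) * lam ^ 2) * (deg w z * f z ^ 2)
              + κ * (deg w z * gam w f f z) := by
          intro z; rw [hlapf z]; ring
        rw [Finset.sum_congr rfl fun z _ => e z, Finset.sum_add_distrib,
          ← Finset.mul_sum, ← Finset.mul_sum, ← hT, hsum_gam]
      rw [h1, hsum_gam2] at h
      linarith
    have hLich : 0 ≤ lam - lam * (1 / m) - κ := by
      by_contra hcon
      push_neg at hcon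
      nlinarith [mul_pos (mul_pos hlam hTpos) (show 0 < lam * (1 / m) + κ - lam by linarith), hCDsum]
    have hdm : 0 < lam * (1 / m) := mul_pos hlam (one_div_pos.mpr hm)
    have hαpos : 0 < α := by
      by_contra h
      push_neg at h
      nlinarith [mul_nonneg (neg_nonneg.mpr h) hlam.le]
    have hN : 0 ≤ (α ^ 2 - 4 * (1 / m)) * lam + 2 * κ * α := by
      nlinarith [mul_pos (show (0 : ℝ) < α + 2 by linarith) hα]
    -- maximum point of H
    obtain ⟨x₀, hx₀⟩ := Finite.exists_max (fun z => gradsq w f z + α * lam * f z ^ 2)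
    have hmax : ∀ y, gradsq w f y + α * lam * f y ^ 2
        ≤ gradsq w f x₀ + α * lam * f x₀ ^ 2 := hx₀
    have hlap0 : lap w (fun z => gradsq w f z + α * lam * f z ^ 2) x₀ ≤ 0 :=
      lap_nonpos w hnonneg hdeg _ x₀ hmax
    have hlapH : lap w (fun z => gradsq w f z + α * lam * f z ^ 2) x₀
        = lap w (gradsq w f) x₀ + (α * lam) * lap w (fun z => f z * f z) x₀ := by
      rw [show (fun z => gradsq w f z + α * lam * f z ^ 2)
          = (fun z => gradsq w f z + (α * lam) * (f z * f z)) from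
        funext fun z => by ring]
      exact lap_add_smul w (α * lam) _ _ x₀
    have hlapsq : lap w (fun z => f z * f z) x₀
        = gradsq w f x₀ + 2 * f x₀ * (-lam * f x₀) := by
      rw [lap_sq, hlapf]
    have hCDpt : 4 * (1 / m) * lam ^ 2 * f x₀ ^ 2 + (2 * κ - 2 * lam) * gradsq w f x₀
        ≤ lap w (gradsq w f) x₀ := by
      have h := hCD f x₀
      simp only [gam2] at h
      simp only [show lap w f = fun y => -lam * f y from funext hlapf,
        gam_smul_right, show gam w f f = fun z => (1 / 2) * gradsq w f z from
        funext (gam_self w f), lap_smul] at h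
      nlinarith [h]
    have hkey : ((α - 2) * lam + 2 * κ) * gradsq w f x₀
        ≤ (2 * α - 4 * (1 / m)) * lam ^ 2 * f x₀ ^ 2 := by
      have h0 : lap w (gradsq w f) x₀
          + (α * lam) * (gradsq w f x₀ + 2 * f x₀ * (-lam * f x₀)) ≤ 0 := by
        rw [← hlapsq, ← hlapH]; exact hlap0
      nlinarith [hCDpt, h0]
    have hbdd : BddAbove (Set.range fun z => f z ^ 2) := (Set.finite_range _).bddAbove
    have hsup : f x₀ ^ 2 ≤ ⨆ z, f z ^ 2 := le_ciSup hbdd x₀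
    have hMnn : (0 : ℝ) ≤ ⨆ z, f z ^ 2 := le_trans (sq_nonneg _) hsup
    rw [show (α ^ 2 - 4 / m) * lam + 2 * κ * α
        = (α ^ 2 - 4 * (1 / m)) * lam + 2 * κ * α from by ring]
    rw [div_mul_eq_mul_div, div_mul_eq_mul_div, le_div_iff₀ hα]
    have h1 : (gradsq w f x + α * lam * f x ^ 2) * ((α - 2) * lam + 2 * κ)
        ≤ (gradsq w f x₀ + α * lam * f x₀ ^ 2) * ((α - 2) * lam + 2 * κ) :=
      mul_le_mul_of_nonneg_right (hmax x) hα.le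
    have h2 : (gradsq w f x₀ + α * lam * f x₀ ^ 2) * ((α - 2) * lam + 2 * κ)
        ≤ ((α ^ 2 - 4 * (1 / m)) * lam + 2 * κ * α) * lam * f x₀ ^ 2 := by
      nlinarith [hkey]
    have h3 : ((α ^ 2 - 4 * (1 / m)) * lam + 2 * κ * α) * lam * f x₀ ^ 2
        ≤ ((α ^ 2 - 4 * (1 / m)) * lam + 2 * κ * α) * lam * ⨆ z, f z ^ 2 :=
      mul_le_mul_of_nonneg_left hsup (mul_nonneg hN hlam.le)
    linarith
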